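/- For natural numbers n, m, k with m > k, m > n, the number M_{n,k}(m) of merging paths from (0,0) to (n,m) with exactly k zeros satisfies M_{n,k}(m) = C(m+n, n-(m-k)+1) - C(m+n, n-(m-k)-1). -/

import Mathlib

/-- Process an arrival sequence with right-lane count `R` and left-lane count `L`:
`false` (a red car) or a shorter-or-equal right lane sends the car right. -/
def procAux : ℕ → ℕ → List Bool → ℕ × ℕ
  | R, L, [] => (R, L)
  | R, L, bi :: rest =>
    if bi = false ∨ R ≤ L then procAux (R + 1) L rest else procAux R (L + 1) rest

/-- Final (right lane length, left lane length) of an arrival sequence. -/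
def proc (b : List Bool) : ℕ × ℕ := procAux 0 0 b

/-- The final length of the right lane. -/
def rlen (b : List Bool) : ℕ := (proc b).1

/-- Number of bounces: steps where `bᵢ = 1` and the lanes are equal. -/
def bncAux : ℕ → ℕ → List Bool → ℕ
  | _, _, [] => 0
  | R, L, bi :: rest =>
    if bi = true ∧ R = L then 1 + bncAux (R + 1) L rest
    else if bi = false ∨ R ≤ L then bncAux (R + 1) L rest
    else bncAux R (L + 1) rest

def bnc (b : List Bool) : ℕ := bncAux 0 0 b

/-- The parity vector: starts at `0` and toggles just after each bounce. -/
def pvAux : ℕ → ℕ → Bool → List Bool → List Bool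
  | _, _, _, [] => []
  | R, L, p, bi :: rest =>
    let p' := if bi = true ∧ R = L then !p else p
    if bi = false ∨ R ≤ L then p :: pvAux (R + 1) L p' rest
    else p :: pvAux R (L + 1) p' rest

def parityVec (b : List Bool) : List Bool := pvAux 0 0 false b

/-- `φ(b) = b + p(b)` bitwise mod 2. -/
def phi (b : List Bool) : List Bool := List.zipWith xor b (parityVec b)

/-- Binomial coefficient with integer lower index, zero when negative. -/
def chooseZ (a : ℕ) (b : ℤ) : ℕ := if 0 ≤ b then a.choose b.toNat else 0


lemma chooseZ_neg (a : ℕ) {b : ℤ} (h : b < 0) : chooseZ a b = 0 := if_neg (by omega)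

lemma chooseZ_pascal (a : ℕ) (b : ℤ) :
    (chooseZ (a + 1) b : ℤ) = chooseZ a (b - 1) + chooseZ a b := by
  unfold chooseZ
  rcases lt_trichotomy b 0 with h | h | h
  · rw [if_neg (by omega), if_neg (by omega), if_neg (by omega)]; simp
  · subst h; simp
  · rw [if_pos (by omega), if_pos (by omega), if_pos (by omega)]
    have hb : b.toNat = (b - 1).toNat + 1 := by omega
    rw [hb, Nat.choose_succ_succ]
    push_cast
    try ring

lemma chooseZ_symm (M : ℕ) :
    chooseZ (2 * M + 1) ((M : ℤ) + 1) = chooseZ (2 * M + 1) (M : ℤ) := by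
  unfold chooseZ
  rw [if_pos (by omega), if_pos (by omega)]
  have h1 : ((M : ℤ) + 1).toNat = M + 1 := by omega
  have h2 : ((M : ℤ)).toNat = M := by omega
  rw [h1, h2]
  have h := Nat.choose_symm (n := 2 * M + 1) (k := M) (by omega)
  have h3 : 2 * M + 1 - M = M + 1 := by omega
  rw [h3] at h
  exact h

def F (m n k : ℕ) : ℤ :=
  if n ≤ m ∧ k ≤ m then
    (if k = m ∨ n = m then (chooseZ (m + n) ((n : ℤ) - m + k) : ℤ)
     else (chooseZ (m + n) ((n : ℤ) - m + k + 1) : ℤ))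
    - (chooseZ (m + n) ((n : ℤ) - m + k - 1) : ℤ)
  else 0

lemma F_zero {m n k : ℕ} (h : m < n ∨ m < k) : F m n k = 0 := if_neg (by omega)

lemma F_of_or (m n k : ℕ) (h1 : n ≤ m) (h2 : k ≤ m) (h : k = m ∨ n = m) :
    F m n k = (chooseZ (m + n) ((n : ℤ) - m + k) : ℤ)
      - (chooseZ (m + n) ((n : ℤ) - m + k - 1) : ℤ) := by
  unfold F
  rw [if_pos ⟨h1, h2⟩, if_pos h]

lemma F_of_lt (m n k : ℕ) (h1 : n < m) (h2 : k < m) :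
    F m n k = (chooseZ (m + n) ((n : ℤ) - m + k + 1) : ℤ)
      - (chooseZ (m + n) ((n : ℤ) - m + k - 1) : ℤ) := by
  unfold F
  rw [if_pos ⟨by omega, by omega⟩, if_neg (by omega)]

lemma F_rec (m n k : ℕ) (h : 1 ≤ m + n) :
    ((if 1 ≤ m ∧ 1 ≤ k then F (m - 1) n (k - 1) else 0)
      + (if 1 ≤ m ∧ m ≤ n + 1 then F (m - 1) n k else 0))
    + (if 1 ≤ n ∧ n ≤ m then F m (n - 1) k else 0) = F m n k := by
  by_cases hbad : m < n ∨ m < k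
  · have t1 : (if 1 ≤ m ∧ 1 ≤ k then F (m - 1) n (k - 1) else 0) = 0 := by
      split_ifs with hg
      · exact F_zero (by omega)
      · rfl
    have t2 : (if 1 ≤ m ∧ m ≤ n + 1 then F (m - 1) n k else 0) = 0 := by
      split_ifs with hg
      · exact F_zero (by omega)
      · rfl
    have t3 : (if 1 ≤ n ∧ n ≤ m then F m (n - 1) k else 0) = 0 := by
      split_ifs with hg
      · exact F_zero (by omega)
      · rfl
    rw [t1, t2, t3, F_zero hbad]
    ring
  · push_neg at hbad
    obtain ⟨hn, hk⟩ := hbad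
    have hm : 1 ≤ m := by omega
    obtain ⟨M, rfl⟩ : ∃ M, m = M + 1 := ⟨m - 1, by omega⟩
    have hsub : M + 1 - 1 = M := rfl
    by_cases hnm : n = M + 1
    · -- n = m case
      subst hnm
      have t1 : (if 1 ≤ M + 1 ∧ 1 ≤ k then F (M + 1 - 1) (M + 1) (k - 1) else 0) = 0 := by
        split_ifs with hg
        · rw [hsub]; exact F_zero (by omega)
        · rfl
      have t2 : (if 1 ≤ M + 1 ∧ M + 1 ≤ M + 1 + 1 then F (M + 1 - 1) (M + 1) k else 0) = 0 := by
        split_ifs with hg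
        · rw [hsub]; exact F_zero (by omega)
        · rfl
      have t3 : (if 1 ≤ M + 1 ∧ M + 1 ≤ M + 1 then F (M + 1) (M + 1 - 1) k else 0)
          = F (M + 1) M k := by rw [if_pos ⟨by omega, le_refl _⟩, hsub]
      rw [t1, t2, t3, zero_add, zero_add]
      by_cases hkm : k = M + 1
      · subst hkm
        rw [F_of_or (M + 1) M (M + 1) (by omega) (by omega) (Or.inl rfl),
            F_of_or (M + 1) (M + 1) (M + 1) (le_refl _) (le_refl _) (Or.inl rfl)]
        rw [show (M : ℤ) - (M + 1 : ℕ) + (M + 1 : ℕ) - 1 = (M : ℤ) - 1 by push_cast; try ring]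
        rw [show (M : ℤ) - (M + 1 : ℕ) + (M + 1 : ℕ) = (M : ℤ) by push_cast; try ring]
        rw [show ((M + 1 : ℕ) : ℤ) - (M + 1 : ℕ) + (M + 1 : ℕ) - 1 = (M : ℤ) by push_cast; try ring]
        rw [show ((M + 1 : ℕ) : ℤ) - (M + 1 : ℕ) + (M + 1 : ℕ) = (M : ℤ) + 1 by push_cast; try ring]
        rw [show M + 1 + M = 2 * M + 1 by omega,
            show M + 1 + (M + 1) = (2 * M + 1) + 1 by omega]
        rw [chooseZ_pascal (2 * M + 1) ((M : ℤ) + 1), chooseZ_pascal (2 * M + 1) (M : ℤ)]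
        rw [show (M : ℤ) + 1 - 1 = (M : ℤ) by ring]
        rw [chooseZ_symm M]
        ring
      · -- k < m, n = m
        have hkM : k ≤ M := by omega
        rw [F_of_lt (M + 1) M k (by omega) (by omega),
            F_of_or (M + 1) (M + 1) k (le_refl _) (by omega) (Or.inr rfl)]
        rw [show (M : ℤ) - (M + 1 : ℕ) + k - 1 = (k : ℤ) - 2 by push_cast; try ring]
        rw [show (M : ℤ) - (M + 1 : ℕ) + k + 1 = (k : ℤ) by push_cast; try ring]
        rw [show ((M + 1 : ℕ) : ℤ) - (M + 1 : ℕ) + k - 1 = (k : ℤ) - 1 by push_cast; try ring]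
        rw [show ((M + 1 : ℕ) : ℤ) - (M + 1 : ℕ) + k = (k : ℤ) by push_cast; try ring]
        rw [show M + 1 + (M + 1) = (M + 1 + M) + 1 by omega]
        rw [chooseZ_pascal (M + 1 + M) ((k : ℤ)), chooseZ_pascal (M + 1 + M) ((k : ℤ) - 1)]
        ring
    · -- n < m
      have hnM : n ≤ M := by omega
      by_cases hkm : k = M + 1
      · -- k = m
        subst hkm
        have t2 : (if 1 ≤ M + 1 ∧ M + 1 ≤ n + 1 then F (M + 1 - 1) n (M + 1) else 0) = 0 := by
          split_ifs with hg
          · rw [hsub]; exact F_zero (by omega)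
          · rfl
        have t1 : (if 1 ≤ M + 1 ∧ 1 ≤ M + 1 then F (M + 1 - 1) n (M + 1 - 1) else 0)
            = F M n M := by rw [if_pos ⟨by omega, by omega⟩, hsub]
        have t3 : (if 1 ≤ n ∧ n ≤ M + 1 then F (M + 1) (n - 1) (M + 1) else 0)
            = (chooseZ (M + n) ((n : ℤ) - 1) : ℤ) - (chooseZ (M + n) ((n : ℤ) - 2) : ℤ) := by
          by_cases hn1 : 1 ≤ n
          · rw [if_pos ⟨hn1, by omega⟩]
            rw [F_of_or (M + 1) (n - 1) (M + 1) (by omega) (le_refl _) (Or.inl rfl)]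
            rw [show ((n - 1 : ℕ) : ℤ) - (M + 1 : ℕ) + (M + 1 : ℕ) - 1 = (n : ℤ) - 2 by
              push_cast [hn1]; try ring]
            rw [show ((n - 1 : ℕ) : ℤ) - (M + 1 : ℕ) + (M + 1 : ℕ) = (n : ℤ) - 1 by
              push_cast [hn1]; try ring]
            rw [show M + 1 + (n - 1) = M + n by omega]
          · have hn0 : n = 0 := by omega
            subst hn0
            rw [if_neg (by omega)]
            rw [chooseZ_neg (M + 0) (b := ((0 : ℕ) : ℤ) - 1) (by simp),
                chooseZ_neg (M + 0) (b := ((0 : ℕ) : ℤ) - 2) (by simp)]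
            push_cast
            try ring
        rw [t1, t2, t3, add_zero]
        rw [F_of_or M n M hnM (le_refl _) (Or.inl rfl)]
        rw [F_of_or (M + 1) n (M + 1) (by omega) (le_refl _) (Or.inl rfl)]
        rw [show (n : ℤ) - M + M - 1 = (n : ℤ) - 1 by ring]
        rw [show (n : ℤ) - M + M = (n : ℤ) by ring]
        rw [show (n : ℤ) - (M + 1 : ℕ) + (M + 1 : ℕ) - 1 = (n : ℤ) - 1 by push_cast; try ring]
        rw [show (n : ℤ) - (M + 1 : ℕ) + (M + 1 : ℕ) = (n : ℤ) by push_cast; try ring]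
        rw [show M + 1 + n = (M + n) + 1 by omega]
        rw [chooseZ_pascal (M + n) (n : ℤ), chooseZ_pascal (M + n) ((n : ℤ) - 1)]
        ring
      · -- k ≤ M, n ≤ M
        have hkM : k ≤ M := by omega
        by_cases hn2 : n = M
        · -- n = M boundary
          subst hn2
          have t2 : (if 1 ≤ n + 1 ∧ n + 1 ≤ n + 1 then F (n + 1 - 1) n k else 0)
              = F n n k := by rw [if_pos ⟨by omega, le_refl _⟩, hsub]
          have t1 : (if 1 ≤ n + 1 ∧ 1 ≤ k then F (n + 1 - 1) n (k - 1) else 0)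
              = (chooseZ (n + n) ((k : ℤ) - 1) : ℤ) - (chooseZ (n + n) ((k : ℤ) - 2) : ℤ) := by
            by_cases hk1 : 1 ≤ k
            · rw [if_pos ⟨by omega, hk1⟩, hsub]
              rw [F_of_or n n (k - 1) (le_refl _) (by omega) (Or.inr rfl)]
              rw [show ((n : ℤ)) - n + (k - 1 : ℕ) - 1 = (k : ℤ) - 2 by push_cast [hk1]; try ring]
              rw [show ((n : ℤ)) - n + (k - 1 : ℕ) = (k : ℤ) - 1 by push_cast [hk1]; try ring]
            · have hk0 : k = 0 := by omega
              subst hk0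
              rw [if_neg (by omega)]
              rw [chooseZ_neg (n + n) (b := ((0 : ℕ) : ℤ) - 1) (by simp),
                  chooseZ_neg (n + n) (b := ((0 : ℕ) : ℤ) - 2) (by simp)]
              push_cast
              try ring
          have t3 : (if 1 ≤ n ∧ n ≤ n + 1 then F (n + 1) (n - 1) k else 0)
              = (chooseZ (n + n) ((k : ℤ) - 1) : ℤ) - (chooseZ (n + n) ((k : ℤ) - 3) : ℤ) := by
            by_cases hn1 : 1 ≤ n
            · rw [if_pos ⟨hn1, by omega⟩]
              rw [F_of_lt (n + 1) (n - 1) k (by omega) (by omega)]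
              rw [show ((n - 1 : ℕ) : ℤ) - (n + 1 : ℕ) + k - 1 = (k : ℤ) - 3 by
                push_cast [hn1]; try ring]
              rw [show ((n - 1 : ℕ) : ℤ) - (n + 1 : ℕ) + k + 1 = (k : ℤ) - 1 by
                push_cast [hn1]; try ring]
              rw [show n + 1 + (n - 1) = n + n by omega]
            · have hn0 : n = 0 := by omega
              subst hn0
              have hk0 : k = 0 := by omega
              subst hk0
              rw [if_neg (by omega)]
              rw [chooseZ_neg (0 + 0) (b := ((0 : ℕ) : ℤ) - 1) (by simp),
                  chooseZ_neg (0 + 0) (b := ((0 : ℕ) : ℤ) - 3) (by simp)]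
              push_cast
              try ring
          rw [t1, t2, t3]
          rw [F_of_or n n k (le_refl _) hkM (Or.inr rfl)]
          rw [F_of_lt (n + 1) n k (by omega) (by omega)]
          rw [show ((n : ℤ)) - n + k - 1 = (k : ℤ) - 1 by push_cast; try ring]
          rw [show ((n : ℤ)) - n + k = (k : ℤ) by push_cast; try ring]
          rw [show (n : ℤ) - (n + 1 : ℕ) + k - 1 = (k : ℤ) - 2 by push_cast; try ring]
          rw [show (n : ℤ) - (n + 1 : ℕ) + k + 1 = (k : ℤ) by push_cast; try ring]
          rw [show n + 1 + n = (n + n) + 1 by omega]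
          rw [chooseZ_pascal (n + n) ((k : ℤ)), chooseZ_pascal (n + n) ((k : ℤ) - 2)]
          ring
        · -- generic interior n < M
          have hnM2 : n < M := by omega
          have t2 : (if 1 ≤ M + 1 ∧ M + 1 ≤ n + 1 then F (M + 1 - 1) n k else 0) = 0 := by
            rw [if_neg (by omega)]
          have t1 : (if 1 ≤ M + 1 ∧ 1 ≤ k then F (M + 1 - 1) n (k - 1) else 0)
              = (chooseZ (M + n) ((n : ℤ) - M + k) : ℤ)
                - (chooseZ (M + n) ((n : ℤ) - M + k - 2) : ℤ) := by
            by_cases hk1 : 1 ≤ k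
            · rw [if_pos ⟨by omega, hk1⟩, hsub]
              rw [F_of_lt M n (k - 1) (by omega) (by omega)]
              rw [show (n : ℤ) - M + (k - 1 : ℕ) - 1 = (n : ℤ) - M + k - 2 by push_cast [hk1]; try ring]
              rw [show (n : ℤ) - M + (k - 1 : ℕ) + 1 = (n : ℤ) - M + k by push_cast [hk1]; try ring]
            · have hk0 : k = 0 := by omega
              subst hk0
              rw [if_neg (by omega)]
              rw [chooseZ_neg (M + n) (b := (n : ℤ) - M + ((0 : ℕ) : ℤ)) (by push_cast; omega),
                  chooseZ_neg (M + n) (b := (n : ℤ) - M + ((0 : ℕ) : ℤ) - 2) (by push_cast; omega)]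
              push_cast
              try ring
          have t3 : (if 1 ≤ n ∧ n ≤ M + 1 then F (M + 1) (n - 1) k else 0)
              = (chooseZ (M + n) ((n : ℤ) - M + k - 1) : ℤ)
                - (chooseZ (M + n) ((n : ℤ) - M + k - 3) : ℤ) := by
            by_cases hn1 : 1 ≤ n
            · rw [if_pos ⟨hn1, by omega⟩]
              rw [F_of_lt (M + 1) (n - 1) k (by omega) (by omega)]
              rw [show ((n - 1 : ℕ) : ℤ) - (M + 1 : ℕ) + k - 1 = (n : ℤ) - M + k - 3 by
                push_cast [hn1]; try ring]
              rw [show ((n - 1 : ℕ) : ℤ) - (M + 1 : ℕ) + k + 1 = (n : ℤ) - M + k - 1 by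
                push_cast [hn1]; try ring]
              rw [show M + 1 + (n - 1) = M + n by omega]
            · have hn0 : n = 0 := by omega
              subst hn0
              rw [if_neg (by omega)]
              rw [chooseZ_neg (M + 0) (b := ((0 : ℕ) : ℤ) - M + k - 1) (by push_cast; omega),
                  chooseZ_neg (M + 0) (b := ((0 : ℕ) : ℤ) - M + k - 3) (by push_cast; omega)]
              push_cast
              try ring
          rw [t1, t2, t3, add_zero]
          rw [F_of_lt (M + 1) n k (by omega) (by omega)]
          rw [show (n : ℤ) - (M + 1 : ℕ) + k - 1 = (n : ℤ) - M + k - 2 by push_cast; try ring]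
          rw [show (n : ℤ) - (M + 1 : ℕ) + k + 1 = (n : ℤ) - M + k by push_cast; try ring]
          rw [show M + 1 + n = (M + n) + 1 by omega]
          rw [chooseZ_pascal (M + n) ((n : ℤ) - M + k),
              chooseZ_pascal (M + n) ((n : ℤ) - M + k - 2)]
          ring


lemma procAux_append (R L : ℕ) (l : List Bool) (x : Bool) :
    procAux R L (l ++ [x]) =
      if x = false ∨ (procAux R L l).1 ≤ (procAux R L l).2
      then ((procAux R L l).1 + 1, (procAux R L l).2)
      else ((procAux R L l).1, (procAux R L l).2 + 1) := by
  induction l generalizing R L with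
  | nil => simp [procAux]; by_cases h1 : x = false <;> by_cases h2 : R ≤ L <;> simp_all
  | cons b t ih =>
    simp only [List.cons_append, procAux]
    split <;> exact ih _ _

lemma ofFn_snoc' {d : ℕ} (c : Fin d → Bool) (x : Bool) :
    List.ofFn (Fin.snoc c x : Fin (d + 1) → Bool) = List.ofFn c ++ [x] := by
  rw [List.ofFn_succ']
  simp [List.concat_eq_append]

def cnt (d m n k : ℕ) : ℕ :=
  (Finset.univ.filter (fun c : Fin d → Bool =>
      (List.ofFn c).count false = k ∧ proc (List.ofFn c) = (m, n))).card

lemma sum_ite_or {A B : Prop} [Decidable A] [Decidable B] (h : ¬(A ∧ B)) :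
    (if A ∨ B then (1 : ℕ) else 0) = (if A then 1 else 0) + (if B then 1 else 0) := by
  by_cases hA : A <;> by_cases hB : B <;> simp_all

lemma cnt_succ (d m n k : ℕ) :
    cnt (d + 1) m n k =
      ((if 1 ≤ m ∧ 1 ≤ k then cnt d (m - 1) n (k - 1) else 0)
        + (if 1 ≤ m ∧ m ≤ n + 1 then cnt d (m - 1) n k else 0))
      + (if 1 ≤ n ∧ n ≤ m then cnt d m (n - 1) k else 0) := by
  have key : ∀ (x : Bool) (c : Fin d → Bool),
      (List.ofFn (Fin.snocEquiv (fun _ => Bool) (x, c)) : List Bool)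
        = List.ofFn c ++ [x] := by
    intro x c
    have h : (Fin.snocEquiv (fun _ => Bool) (x, c) : Fin (d+1) → Bool) = Fin.snoc c x := by
      funext i; simp [Fin.snocEquiv]
    rw [h, ofFn_snoc']
  have eT : ∀ c : Fin d → Bool,
      (if (List.ofFn (Fin.snocEquiv (fun _ => Bool) (true, c))).count false = k ∧
          proc (List.ofFn (Fin.snocEquiv (fun _ => Bool) (true, c))) = (m, n) then (1:ℕ) else 0)
      = (if ((1 ≤ m ∧ m ≤ n + 1) ∧ ((List.ofFn c).count false = k ∧ proc (List.ofFn c) = (m - 1, n))) then 1 else 0)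
        + (if ((1 ≤ n ∧ n ≤ m) ∧ ((List.ofFn c).count false = k ∧ proc (List.ofFn c) = (m, n - 1))) then 1 else 0) := by
    intro c
    rw [key, List.count_append]
    unfold proc
    rw [procAux_append]
    set p := procAux 0 0 (List.ofFn c) with hp
    rw [show (([true] : List Bool).count false) = 0 from rfl, Nat.add_zero]
    rw [show ((if (true : Bool) = false ∨ p.1 ≤ p.2 then (p.1 + 1, p.2) else (p.1, p.2 + 1)) : ℕ × ℕ)
        = if p.1 ≤ p.2 then (p.1 + 1, p.2) else (p.1, p.2 + 1) by simp]
    rw [← sum_ite_or]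
    · apply if_congr _ rfl rfl
      constructor
      · rintro ⟨hcnt, heq⟩
        by_cases hle : p.1 ≤ p.2
        · rw [if_pos hle] at heq
          left
          have h1 : p.1 + 1 = m := congrArg Prod.fst heq
          have h2 : p.2 = n := congrArg Prod.snd heq
          refine ⟨⟨by omega, by omega⟩, hcnt, ?_⟩
          have hpp : p = (p.1, p.2) := rfl
          rw [hpp, Prod.mk.injEq]; omega
        · rw [if_neg hle] at heq
          right
          have h1 : p.1 = m := congrArg Prod.fst heq
          have h2 : p.2 + 1 = n := congrArg Prod.snd heq
          refine ⟨⟨by omega, by omega⟩, hcnt, ?_⟩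
          have hpp : p = (p.1, p.2) := rfl
          rw [hpp, Prod.mk.injEq]; omega
      · rintro (⟨⟨hm, hmn⟩, hcnt, heq⟩ | ⟨⟨hn, hnm⟩, hcnt, heq⟩)
        · have h1 : p.1 = m - 1 := by rw [heq]
          have h2 : p.2 = n := by rw [heq]
          refine ⟨hcnt, ?_⟩
          rw [if_pos (by omega), Prod.mk.injEq]
          omega
        · have h1 : p.1 = m := by rw [heq]
          have h2 : p.2 = n - 1 := by rw [heq]
          refine ⟨hcnt, ?_⟩
          rw [if_neg (by omega), Prod.mk.injEq]
          omega
    · rintro ⟨⟨⟨hm, _⟩, _, h1⟩, ⟨⟨hn, hnm⟩, _, h2⟩⟩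
      have e1 : p.1 = m - 1 := by rw [h1]
      have e2 : p.1 = m := by rw [h2]
      omega
  have eF : ∀ c : Fin d → Bool,
      (if (List.ofFn (Fin.snocEquiv (fun _ => Bool) (false, c))).count false = k ∧
          proc (List.ofFn (Fin.snocEquiv (fun _ => Bool) (false, c))) = (m, n) then (1:ℕ) else 0)
      = (if ((1 ≤ m ∧ 1 ≤ k) ∧ ((List.ofFn c).count false = k - 1 ∧ proc (List.ofFn c) = (m - 1, n))) then 1 else 0) := by
    intro c
    rw [key, List.count_append]
    unfold proc
    rw [procAux_append]
    set p := procAux 0 0 (List.ofFn c) with hp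
    rw [show (([false] : List Bool).count false) = 1 from rfl]
    rw [show ((if (false : Bool) = false ∨ p.1 ≤ p.2 then (p.1 + 1, p.2) else (p.1, p.2 + 1)) : ℕ × ℕ)
        = (p.1 + 1, p.2) by simp]
    apply if_congr _ rfl rfl
    constructor
    · rintro ⟨hcnt, heq⟩
      have h1 : p.1 + 1 = m := congrArg Prod.fst heq
      have h2 : p.2 = n := congrArg Prod.snd heq
      refine ⟨⟨by omega, by omega⟩, by omega, ?_⟩
      have hpp : p = (p.1, p.2) := rfl
      rw [hpp, Prod.mk.injEq]; omega
    · rintro ⟨⟨hm, hk⟩, hcnt, heq⟩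
      have h1 : p.1 = m - 1 := by rw [heq]
      have h2 : p.2 = n := by rw [heq]
      refine ⟨by omega, ?_⟩
      rw [Prod.mk.injEq]; omega
  have guardSum : ∀ (G : Prop) [Decidable G] (m' n' k' : ℕ),
      (∑ c : Fin d → Bool,
        if (G ∧ ((List.ofFn c).count false = k' ∧ proc (List.ofFn c) = (m', n'))) then (1:ℕ) else 0)
      = if G then cnt d m' n' k' else 0 := by
    intro G _ m' n' k'
    by_cases hg : G
    · rw [if_pos hg]
      unfold cnt
      rw [Finset.card_filter]
      exact Finset.sum_congr rfl fun c _ => if_congr (and_iff_right hg) rfl rfl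
    · rw [if_neg hg]
      exact Finset.sum_eq_zero fun c _ => by rw [if_neg (fun h => hg h.1)]
  have main : cnt (d + 1) m n k
      = (∑ c : Fin d → Bool,
          if (List.ofFn (Fin.snocEquiv (fun _ => Bool) (true, c))).count false = k ∧
            proc (List.ofFn (Fin.snocEquiv (fun _ => Bool) (true, c))) = (m, n) then (1:ℕ) else 0)
        + (∑ c : Fin d → Bool,
          if (List.ofFn (Fin.snocEquiv (fun _ => Bool) (false, c))).count false = k ∧
            proc (List.ofFn (Fin.snocEquiv (fun _ => Bool) (false, c))) = (m, n) then (1:ℕ) else 0) := by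
    unfold cnt
    rw [Finset.card_filter]
    rw [← Equiv.sum_comp (Fin.snocEquiv (fun _ => Bool))
      (fun c => if (List.ofFn c).count false = k ∧ proc (List.ofFn c) = (m, n) then (1:ℕ) else 0)]
    rw [Fintype.sum_prod_type]
    rw [Fintype.sum_bool]
  rw [main]
  rw [Finset.sum_congr rfl fun c _ => eT c, Finset.sum_congr rfl fun c _ => eF c,
    Finset.sum_add_distrib, guardSum, guardSum, guardSum]
  ring

lemma cnt_eq_F : ∀ (D m n k : ℕ), m + n = D → (cnt D m n k : ℤ) = F m n k := by
  intro D
  induction D using Nat.strong_induction_on with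
  | _ D ih =>
    intro m n k hD
    match D, hD with
    | 0, hD =>
      have hm : m = 0 := by omega
      have hn : n = 0 := by omega
      subst hm; subst hn
      rcases Nat.eq_zero_or_pos k with hk | hk
      · subst hk
        have : cnt 0 0 0 0 = 1 := by
          unfold cnt proc
          rw [Finset.filter_true_of_mem]
          · simp
          · intro c _
            simp [List.ofFn_zero, procAux]
        rw [this]
        unfold F
        rw [if_pos ⟨le_refl _, le_refl _⟩, if_pos (Or.inl rfl)]
        rw [show ((0:ℕ):ℤ) - (0:ℕ) + (0:ℕ) - 1 = (-1 : ℤ) by push_cast; try ring]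
        rw [show ((0:ℕ):ℤ) - (0:ℕ) + (0:ℕ) = (0 : ℤ) by push_cast; try ring]
        rw [chooseZ_neg 0 (b := (-1 : ℤ)) (by norm_num)]
        simp [chooseZ]
      · have h1 : cnt 0 0 0 k = 0 := by
          unfold cnt proc
          rw [Finset.filter_false_of_mem, Finset.card_empty]
          intro c _
          simp [List.ofFn_zero, procAux]
          omega
        have h2 : F 0 0 k = 0 := F_zero (by omega)
        rw [h1, h2]
        simp
    | (d + 1), hD =>
      rw [cnt_succ]
      push_cast
      have h1 : ((if 1 ≤ m ∧ 1 ≤ k then (cnt d (m - 1) n (k - 1) : ℤ) else 0))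
          = (if 1 ≤ m ∧ 1 ≤ k then F (m - 1) n (k - 1) else 0) := by
        split_ifs with hg
        · exact ih d (by omega) (m - 1) n (k - 1) (by omega)
        · rfl
      have h2 : ((if 1 ≤ m ∧ m ≤ n + 1 then (cnt d (m - 1) n k : ℤ) else 0))
          = (if 1 ≤ m ∧ m ≤ n + 1 then F (m - 1) n k else 0) := by
        split_ifs with hg
        · exact ih d (by omega) (m - 1) n k (by omega)
        · rfl
      have h3 : ((if 1 ≤ n ∧ n ≤ m then (cnt d m (n - 1) k : ℤ) else 0))
          = (if 1 ≤ n ∧ n ≤ m then F m (n - 1) k else 0) := by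
        split_ifs with hg
        · exact ih d (by omega) m (n - 1) k (by omega)
        · rfl
      rw [h1, h2, h3]
      exact F_rec m n k (by omega)

theorem stmt_10 (m n k : ℕ) (hmk : m > k) (hmn : m > n) :
    ((Finset.univ.filter (fun c : Fin (m + n) → Bool =>
        (List.ofFn c).count false = k ∧ proc (List.ofFn c) = (m, n))).card : ℤ) =
      chooseZ (m + n) ((n : ℤ) - ((m : ℤ) - (k : ℤ)) + 1) -
        chooseZ (m + n) ((n : ℤ) - ((m : ℤ) - (k : ℤ)) - 1) := by
  have h0 : (Finset.univ.filter (fun c : Fin (m + n) → Bool =>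
      (List.ofFn c).count false = k ∧ proc (List.ofFn c) = (m, n))).card = cnt (m + n) m n k := rfl
  rw [h0, cnt_eq_F (m + n) m n k rfl]
  rw [F_of_lt m n k hmn hmk]
  rw [show (n : ℤ) - ((m : ℤ) - (k : ℤ)) + 1 = (n : ℤ) - m + k + 1 by ring]
  rw [show (n : ℤ) - ((m : ℤ) - (k : ℤ)) - 1 = (n : ℤ) - m + k - 1 by ring]
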